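/- The set of 3-forms of G̃₂-type on ℝ⁷, i.e., the orbit {ω³ ∘ (g × g × g) : g ∈ GL(7,ℝ)} of the 3-form ω³ under the pullback action of GL(7,ℝ), is an open subset of the (finite-dimensional, normed) real vector space of alternating 3-forms on ℝ⁷. -/

import Mathlib

open Matrix

noncomputable def p (i : Fin 7) : (Fin 7 → ℝ) →ₗ[ℝ] ℝ := LinearMap.proj i

noncomputable def w3 (f g h : (Fin 7 → ℝ) →ₗ[ℝ] ℝ) : (Fin 7 → ℝ) [⋀^Fin 3]→ₗ[ℝ] ℝ :=
  (Matrix.detRowAlternating (n := Fin 3) (R := ℝ)).compLinearMap (LinearMap.pi ![f, g, h])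

noncomputable def ω3 : (Fin 7 → ℝ) [⋀^Fin 3]→ₗ[ℝ] ℝ :=
  w3 (p 0) (p 1) (p 2)
    + (w3 (p 3) (p 4) (p 0) + w3 (p 5) (p 6) (p 0))
    + (w3 (p 3) (p 5) (p 1) - w3 (p 4) (p 6) (p 1))
    + (w3 (p 3) (p 6) (p 2) + w3 (p 4) (p 5) (p 2))

theorem w3_continuous (f g h : (Fin 7 → ℝ) →ₗ[ℝ] ℝ) :
    Continuous fun v : Fin 3 → (Fin 7 → ℝ) => w3 f g h v := by
  have he : (fun v : Fin 3 → (Fin 7 → ℝ) => w3 f g h v)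
      = fun v => Matrix.det (Matrix.of fun i => LinearMap.pi ![f, g, h] (v i)) := rfl
  rw [he]
  exact Continuous.matrix_det <| continuous_matrix fun i j =>
    (![f, g, h] j).continuous_of_finiteDimensional.comp (continuous_apply i)

theorem ω3_continuous : Continuous fun v : Fin 3 → (Fin 7 → ℝ) => ω3 v := by
  have he : (fun v : Fin 3 → (Fin 7 → ℝ) => ω3 v)
      = fun v => w3 (p 0) (p 1) (p 2) v
          + (w3 (p 3) (p 4) (p 0) v + w3 (p 5) (p 6) (p 0) v)
          + (w3 (p 3) (p 5) (p 1) v - w3 (p 4) (p 6) (p 1) v)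
          + (w3 (p 3) (p 6) (p 2) v + w3 (p 4) (p 5) (p 2) v) := rfl
  rw [he]
  exact ((((w3_continuous _ _ _).add
    ((w3_continuous _ _ _).add (w3_continuous _ _ _))).add
    ((w3_continuous _ _ _).sub (w3_continuous _ _ _))).add
    ((w3_continuous _ _ _).add (w3_continuous _ _ _)))

/-- ω³ as a continuous alternating 3-form on ℝ⁷. -/
noncomputable def ω3C : (Fin 7 → ℝ) [⋀^Fin 3]→L[ℝ] ℝ :=
  { toMultilinearMap := ω3.toMultilinearMap
    cont := ω3_continuous
    map_eq_zero_of_eq' := fun v i j hv hij => ω3.map_eq_zero_of_eq v hv hij }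


namespace G2Aux

open Topology Filter

set_option maxRecDepth 10000
set_option maxHeartbeats 2000000

abbrev E7 : Type := Fin 7 → ℝ
abbrev Forms : Type := E7 [⋀^Fin 3]→L[ℝ] ℝ

/-! ### Integer (computable) model -/

def det3 (m : Fin 3 → Fin 3 → ℤ) : ℤ :=
  m 0 0 * (m 1 1 * m 2 2 - m 1 2 * m 2 1)
    - m 0 1 * (m 1 0 * m 2 2 - m 1 2 * m 2 0)
    + m 0 2 * (m 1 0 * m 2 1 - m 1 1 * m 2 0)

def w3Q (a b c : Fin 7) (v : Fin 3 → Fin 7 → ℤ) : ℤ :=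
  det3 fun r s => v r (![a, b, c] s)

def ω3Q (v : Fin 3 → Fin 7 → ℤ) : ℤ :=
  w3Q 0 1 2 v + (w3Q 3 4 0 v + w3Q 5 6 0 v) + (w3Q 3 5 1 v - w3Q 4 6 1 v)
    + (w3Q 3 6 2 v + w3Q 4 5 2 v)

def eQ (j : Fin 7) : Fin 7 → ℤ := fun i => if i = j then 1 else 0

def T : Fin 35 → Fin 3 → Fin 7 :=
  ![![0, 1, 2],
    ![0, 1, 3],
    ![0, 1, 4],
    ![0, 1, 5],
    ![0, 1, 6],
    ![0, 2, 3],
    ![0, 2, 4],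
    ![0, 2, 5],
    ![0, 2, 6],
    ![0, 3, 4],
    ![0, 3, 5],
    ![0, 3, 6],
    ![0, 4, 5],
    ![0, 4, 6],
    ![0, 5, 6],
    ![1, 2, 3],
    ![1, 2, 4],
    ![1, 2, 5],
    ![1, 2, 6],
    ![1, 3, 4],
    ![1, 3, 5],
    ![1, 3, 6],
    ![1, 4, 5],
    ![1, 4, 6],
    ![1, 5, 6],
    ![2, 3, 4],
    ![2, 3, 5],
    ![2, 3, 6],
    ![2, 4, 5],
    ![2, 4, 6],
    ![2, 5, 6],
    ![3, 4, 5],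
    ![3, 4, 6],
    ![3, 5, 6],
    ![4, 5, 6]]

def M0 : Matrix (Fin 7) (Fin 7) ℤ :=
  !![2, 0, 0, 0, 0, 0, 0;
      0, 2, 0, 0, 0, 0, 0;
      0, 0, 2, 0, 0, 0, 0;
      0, 0, 0, -1, 0, 0, 0;
      0, 0, 0, 0, -1, 0, 0;
      0, 0, 0, 0, 0, -1, 0;
      0, 0, 0, 0, 0, 0, -1]

def M1 : Matrix (Fin 7) (Fin 7) ℤ :=
  !![0, 0, 0, 0, 0, -3, 0;
      0, 0, 0, 0, 3, 0, 0;
      0, 0, 0, 6, 0, 0, 0;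
      0, 0, 3, 0, 0, 0, 0;
      0, 0, 0, 0, 0, 0, 0;
      0, 0, 0, 0, 0, 0, 0;
      0, 0, 0, 0, 0, 0, 0]

def M2 : Matrix (Fin 7) (Fin 7) ℤ :=
  !![0, 0, 0, 0, 0, 0, 3;
      0, 0, 0, 0, 0, 0, 0;
      0, 0, 0, 0, 3, 0, 0;
      0, 3, 0, 0, 0, 0, 0;
      0, 0, 0, 0, 0, 0, 0;
      0, 0, 0, 0, 0, 0, 0;
      0, 0, 0, 0, 0, 0, 0]

def M3 : Matrix (Fin 7) (Fin 7) ℤ :=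
  !![0, 0, 0, 0, 0, 0, 0;
      0, 0, 0, 0, 0, 0, 3;
      0, 0, 0, 0, 0, 3, 0;
      -3, 0, 0, 0, 0, 0, 0;
      0, 0, 0, 0, 0, 0, 0;
      0, 0, 0, 0, 0, 0, 0;
      0, 0, 0, 0, 0, 0, 0]

def M4 : Matrix (Fin 7) (Fin 7) ℤ :=
  !![0, 0, 0, 0, 0, 0, 0;
      0, 0, 0, 0, 0, -3, 0;
      0, 0, 0, 0, 0, 0, 3;
      0, 0, 0, 0, 0, 0, 0;
      3, 0, 0, 0, 0, 0, 0;
      0, 0, 0, 0, 0, 0, 0;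
      0, 0, 0, 0, 0, 0, 0]

def M5 : Matrix (Fin 7) (Fin 7) ℤ :=
  !![0, 0, 0, 0, 0, 0, -3;
      0, 0, 0, -6, 0, 0, 0;
      0, 0, 0, 0, 3, 0, 0;
      0, -3, 0, 0, 0, 0, 0;
      0, 0, 0, 0, 0, 0, 0;
      0, 0, 0, 0, 0, 0, 0;
      0, 0, 0, 0, 0, 0, 0]

def M6 : Matrix (Fin 7) (Fin 7) ℤ :=
  !![0, 0, 0, 0, 0, -3, 0;
      0, 0, 0, 0, -3, 0, 0;
      0, 0, 0, 0, 0, 0, 0;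
      0, 0, 3, 0, 0, 0, 0;
      0, 0, 0, 0, 0, 0, 0;
      0, 0, 0, 0, 0, 0, 0;
      0, 0, 0, 0, 0, 0, 0]

def M7 : Matrix (Fin 7) (Fin 7) ℤ :=
  !![0, 0, 0, 0, 0, 0, 0;
      0, 0, 0, 0, 0, -3, 0;
      0, 0, 0, 0, 0, 0, 3;
      0, 0, 0, 0, 0, 0, 0;
      -3, 0, 0, 0, 0, 0, 0;
      0, 0, 0, 0, 0, 0, 0;
      0, 0, 0, 0, 0, 0, 0]

def M8 : Matrix (Fin 7) (Fin 7) ℤ :=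
  !![0, 0, 0, 0, 0, 0, 0;
      0, 0, 0, 0, 0, 0, -3;
      0, 0, 0, 0, 0, -3, 0;
      -3, 0, 0, 0, 0, 0, 0;
      0, 0, 0, 0, 0, 0, 0;
      0, 0, 0, 0, 0, 0, 0;
      0, 0, 0, 0, 0, 0, 0]

def M9 : Matrix (Fin 7) (Fin 7) ℤ :=
  !![2, 0, 0, 0, 0, 0, 0;
      0, -1, 0, 0, 0, 0, 0;
      0, 0, -1, 0, 0, 0, 0;
      0, 0, 0, 2, 0, 0, 0;
      0, 0, 0, 0, 2, 0, 0;
      0, 0, 0, 0, 0, -1, 0;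
      0, 0, 0, 0, 0, 0, -1]

def M10 : Matrix (Fin 7) (Fin 7) ℤ :=
  !![0, 0, 0, 0, 0, 0, 0;
      3, 0, 0, 0, 0, 0, 0;
      0, 0, 0, 0, 0, 0, 0;
      0, 0, 0, 0, 0, 0, -3;
      0, 0, 0, 0, 0, 3, 0;
      0, 0, 0, 0, 0, 0, 0;
      0, 0, 0, 0, 0, 0, 0]

def M11 : Matrix (Fin 7) (Fin 7) ℤ :=
  !![0, 0, 0, 0, 0, 0, 0;
      0, 0, 0, 0, 0, 0, 0;
      3, 0, 0, 0, 0, 0, 0;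
      0, 0, 0, 0, 0, 3, 0;
      0, 0, 0, 0, 0, 0, 3;
      0, 0, 0, 0, 0, 0, 0;
      0, 0, 0, 0, 0, 0, 0]

def M12 : Matrix (Fin 7) (Fin 7) ℤ :=
  !![0, 0, 0, 0, 0, 0, 0;
      0, 0, 0, 0, 0, 0, 0;
      3, 0, 0, 0, 0, 0, 0;
      0, 0, 0, 0, 0, -3, 0;
      0, 0, 0, 0, 0, 0, -3;
      0, 0, 0, 0, 0, 0, 0;
      0, 0, 0, 0, 0, 0, 0]

def M13 : Matrix (Fin 7) (Fin 7) ℤ :=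
  !![0, 0, 0, 0, 0, 0, 0;
      -3, 0, 0, 0, 0, 0, 0;
      0, 0, 0, 0, 0, 0, 0;
      0, 0, 0, 0, 0, 0, -3;
      0, 0, 0, 0, 0, 3, 0;
      0, 0, 0, 0, 0, 0, 0;
      0, 0, 0, 0, 0, 0, 0]

def M14 : Matrix (Fin 7) (Fin 7) ℤ :=
  !![2, 0, 0, 0, 0, 0, 0;
      0, -1, 0, 0, 0, 0, 0;
      0, 0, -1, 0, 0, 0, 0;
      0, 0, 0, -1, 0, 0, 0;
      0, 0, 0, 0, -1, 0, 0;
      0, 0, 0, 0, 0, 2, 0;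
      0, 0, 0, 0, 0, 0, 2]

def M15 : Matrix (Fin 7) (Fin 7) ℤ :=
  !![0, 0, 0, 6, 0, 0, 0;
      0, 0, 0, 0, 0, 0, -3;
      0, 0, 0, 0, 0, 3, 0;
      3, 0, 0, 0, 0, 0, 0;
      0, 0, 0, 0, 0, 0, 0;
      0, 0, 0, 0, 0, 0, 0;
      0, 0, 0, 0, 0, 0, 0]

def M16 : Matrix (Fin 7) (Fin 7) ℤ :=
  !![0, 0, 0, 0, 6, 0, 0;
      0, 0, 0, 0, 0, -3, 0;
      0, 0, 0, 0, 0, 0, -3;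
      0, 0, 0, 0, 0, 0, 0;
      3, 0, 0, 0, 0, 0, 0;
      0, 0, 0, 0, 0, 0, 0;
      0, 0, 0, 0, 0, 0, 0]

def M17 : Matrix (Fin 7) (Fin 7) ℤ :=
  !![0, 0, 0, 0, 0, 3, 0;
      0, 0, 0, 0, 3, 0, 0;
      0, 0, 0, 0, 0, 0, 0;
      0, 0, 3, 0, 0, 0, 0;
      0, 0, 0, 0, 0, 0, 0;
      0, 0, 0, 0, 0, 0, 0;
      0, 0, 0, 0, 0, 0, 0]

def M18 : Matrix (Fin 7) (Fin 7) ℤ :=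
  !![0, 0, 0, 0, 0, 0, 3;
      0, 0, 0, 0, 0, 0, 0;
      0, 0, 0, 0, 3, 0, 0;
      0, -3, 0, 0, 0, 0, 0;
      0, 0, 0, 0, 0, 0, 0;
      0, 0, 0, 0, 0, 0, 0;
      0, 0, 0, 0, 0, 0, 0]

def M19 : Matrix (Fin 7) (Fin 7) ℤ :=
  !![0, 6, 0, 0, 0, 0, 0;
      -3, 0, 0, 0, 0, 0, 0;
      0, 0, 0, 0, 0, 0, 0;
      0, 0, 0, 0, 0, 0, 3;
      0, 0, 0, 0, 0, 3, 0;
      0, 0, 0, 0, 0, 0, 0;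
      0, 0, 0, 0, 0, 0, 0]

def M20 : Matrix (Fin 7) (Fin 7) ℤ :=
  !![-1, 0, 0, 0, 0, 0, 0;
      0, 2, 0, 0, 0, 0, 0;
      0, 0, -1, 0, 0, 0, 0;
      0, 0, 0, 2, 0, 0, 0;
      0, 0, 0, 0, -1, 0, 0;
      0, 0, 0, 0, 0, 2, 0;
      0, 0, 0, 0, 0, 0, -1]

def M21 : Matrix (Fin 7) (Fin 7) ℤ :=
  !![0, 0, 0, 0, 0, 0, 0;
      0, 0, 0, 0, 0, 0, 0;
      0, 3, 0, 0, 0, 0, 0;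
      0, 0, 0, 0, -3, 0, 0;
      0, 0, 0, 0, 0, 0, 0;
      0, 0, 0, 0, 0, 0, 3;
      0, 0, 0, 0, 0, 0, 0]

def M22 : Matrix (Fin 7) (Fin 7) ℤ :=
  !![0, 0, 0, 0, 0, 0, 0;
      0, 0, 0, 0, 0, 0, 0;
      0, 3, 0, 0, 0, 0, 0;
      0, 0, 0, 0, 3, 0, 0;
      0, 0, 0, 0, 0, 0, 0;
      0, 0, 0, 0, 0, 0, -3;
      0, 0, 0, 0, 0, 0, 0]

def M23 : Matrix (Fin 7) (Fin 7) ℤ :=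
  !![1, 0, 0, 0, 0, 0, 0;
      0, -2, 0, 0, 0, 0, 0;
      0, 0, 1, 0, 0, 0, 0;
      0, 0, 0, 1, 0, 0, 0;
      0, 0, 0, 0, -2, 0, 0;
      0, 0, 0, 0, 0, 1, 0;
      0, 0, 0, 0, 0, 0, -2]

def M24 : Matrix (Fin 7) (Fin 7) ℤ :=
  !![0, 0, 0, 0, 0, 0, 0;
      3, 0, 0, 0, 0, 0, 0;
      0, 0, 0, 0, 0, 0, 0;
      0, 0, 0, 0, 0, 0, -3;
      0, 0, 0, 0, 0, -3, 0;
      0, 0, 0, 0, 0, 0, 0;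
      0, 0, 0, 0, 0, 0, 0]

def M25 : Matrix (Fin 7) (Fin 7) ℤ :=
  !![0, 0, 6, 0, 0, 0, 0;
      0, 0, 0, 0, 0, 0, 0;
      -3, 0, 0, 0, 0, 0, 0;
      0, 0, 0, 0, 0, -3, 0;
      0, 0, 0, 0, 0, 0, 3;
      0, 0, 0, 0, 0, 0, 0;
      0, 0, 0, 0, 0, 0, 0]

def M26 : Matrix (Fin 7) (Fin 7) ℤ :=
  !![0, 0, 0, 0, 0, 0, 0;
      0, 0, 6, 0, 0, 0, 0;
      0, -3, 0, 0, 0, 0, 0;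
      0, 0, 0, 0, 3, 0, 0;
      0, 0, 0, 0, 0, 0, 0;
      0, 0, 0, 0, 0, 0, 3;
      0, 0, 0, 0, 0, 0, 0]

def M27 : Matrix (Fin 7) (Fin 7) ℤ :=
  !![-1, 0, 0, 0, 0, 0, 0;
      0, -1, 0, 0, 0, 0, 0;
      0, 0, 2, 0, 0, 0, 0;
      0, 0, 0, 2, 0, 0, 0;
      0, 0, 0, 0, -1, 0, 0;
      0, 0, 0, 0, 0, -1, 0;
      0, 0, 0, 0, 0, 0, 2]

def M28 : Matrix (Fin 7) (Fin 7) ℤ :=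
  !![-1, 0, 0, 0, 0, 0, 0;
      0, -1, 0, 0, 0, 0, 0;
      0, 0, 2, 0, 0, 0, 0;
      0, 0, 0, -1, 0, 0, 0;
      0, 0, 0, 0, 2, 0, 0;
      0, 0, 0, 0, 0, 2, 0;
      0, 0, 0, 0, 0, 0, -1]

def M29 : Matrix (Fin 7) (Fin 7) ℤ :=
  !![0, 0, 0, 0, 0, 0, 0;
      0, 0, 0, 0, 0, 0, 0;
      0, -3, 0, 0, 0, 0, 0;
      0, 0, 0, 0, 3, 0, 0;
      0, 0, 0, 0, 0, 0, 0;
      0, 0, 0, 0, 0, 0, 3;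
      0, 0, 0, 0, 0, 0, 0]

def M30 : Matrix (Fin 7) (Fin 7) ℤ :=
  !![0, 0, 0, 0, 0, 0, 0;
      0, 0, 0, 0, 0, 0, 0;
      3, 0, 0, 0, 0, 0, 0;
      0, 0, 0, 0, 0, 3, 0;
      0, 0, 0, 0, 0, 0, -3;
      0, 0, 0, 0, 0, 0, 0;
      0, 0, 0, 0, 0, 0, 0]

def M31 : Matrix (Fin 7) (Fin 7) ℤ :=
  !![0, 0, 0, 0, 0, 3, 0;
      0, 0, 0, 0, -3, 0, 0;
      0, 0, 0, 0, 0, 0, 0;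
      0, 0, -3, 0, 0, 0, 0;
      0, 0, 0, 0, 0, 0, 0;
      0, 0, 0, 0, 0, 0, 0;
      0, 0, 0, 0, 0, 0, 0]

def M32 : Matrix (Fin 7) (Fin 7) ℤ :=
  !![0, 0, 0, 0, 0, 0, 3;
      0, 0, 0, 0, 0, 0, 0;
      0, 0, 0, 0, -3, 0, 0;
      0, 3, 0, 0, 0, 0, 0;
      0, 0, 0, 0, 0, 0, 0;
      0, 0, 0, 0, 0, 0, 0;
      0, 0, 0, 0, 0, 0, 0]

def M33 : Matrix (Fin 7) (Fin 7) ℤ :=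
  !![0, 0, 0, 0, 0, 0, 0;
      0, 0, 0, 0, 0, 0, 3;
      0, 0, 0, 0, 0, -3, 0;
      -3, 0, 0, 0, 0, 0, 0;
      0, 0, 0, 0, 0, 0, 0;
      0, 0, 0, 0, 0, 0, 0;
      0, 0, 0, 0, 0, 0, 0]

def M34 : Matrix (Fin 7) (Fin 7) ℤ :=
  !![0, 0, 0, 0, 0, 0, 0;
      0, 0, 0, 0, 0, 3, 0;
      0, 0, 0, 0, 0, 0, 3;
      0, 0, 0, 0, 0, 0, 0;
      -3, 0, 0, 0, 0, 0, 0;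
      0, 0, 0, 0, 0, 0, 0;
      0, 0, 0, 0, 0, 0, 0]

def Mt : Fin 35 → Matrix (Fin 7) (Fin 7) ℤ :=
  ![M0, M1, M2, M3, M4, M5, M6, M7, M8, M9, M10, M11, M12, M13, M14, M15, M16, M17, M18, M19, M20, M21, M22, M23, M24, M25, M26, M27, M28, M29, M30, M31, M32, M33, M34]

def LQ (M : Matrix (Fin 7) (Fin 7) ℤ) (t : Fin 3 → Fin 7) : ℤ :=
  ω3Q (Function.update (fun j => eQ (t j)) 0 (fun a => M a (t 0)))
    + ω3Q (Function.update (fun j => eQ (t j)) 1 (fun a => M a (t 1)))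
    + ω3Q (Function.update (fun j => eQ (t j)) 2 (fun a => M a (t 2)))

theorem key0 : ∀ u : Fin 35, LQ M0 (T u) = if u = (0 : Fin 35) then 6 else 0 := by decide

theorem key1 : ∀ u : Fin 35, LQ M1 (T u) = if u = (1 : Fin 35) then 6 else 0 := by decide

theorem key2 : ∀ u : Fin 35, LQ M2 (T u) = if u = (2 : Fin 35) then 6 else 0 := by decide

theorem key3 : ∀ u : Fin 35, LQ M3 (T u) = if u = (3 : Fin 35) then 6 else 0 := by decide

theorem key4 : ∀ u : Fin 35, LQ M4 (T u) = if u = (4 : Fin 35) then 6 else 0 := by decide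

theorem key5 : ∀ u : Fin 35, LQ M5 (T u) = if u = (5 : Fin 35) then 6 else 0 := by decide

theorem key6 : ∀ u : Fin 35, LQ M6 (T u) = if u = (6 : Fin 35) then 6 else 0 := by decide

theorem key7 : ∀ u : Fin 35, LQ M7 (T u) = if u = (7 : Fin 35) then 6 else 0 := by decide

theorem key8 : ∀ u : Fin 35, LQ M8 (T u) = if u = (8 : Fin 35) then 6 else 0 := by decide

theorem key9 : ∀ u : Fin 35, LQ M9 (T u) = if u = (9 : Fin 35) then 6 else 0 := by decide

theorem key10 : ∀ u : Fin 35, LQ M10 (T u) = if u = (10 : Fin 35) then 6 else 0 := by decide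

theorem key11 : ∀ u : Fin 35, LQ M11 (T u) = if u = (11 : Fin 35) then 6 else 0 := by decide

theorem key12 : ∀ u : Fin 35, LQ M12 (T u) = if u = (12 : Fin 35) then 6 else 0 := by decide

theorem key13 : ∀ u : Fin 35, LQ M13 (T u) = if u = (13 : Fin 35) then 6 else 0 := by decide

theorem key14 : ∀ u : Fin 35, LQ M14 (T u) = if u = (14 : Fin 35) then 6 else 0 := by decide

theorem key15 : ∀ u : Fin 35, LQ M15 (T u) = if u = (15 : Fin 35) then 6 else 0 := by decide

theorem key16 : ∀ u : Fin 35, LQ M16 (T u) = if u = (16 : Fin 35) then 6 else 0 := by decide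

theorem key17 : ∀ u : Fin 35, LQ M17 (T u) = if u = (17 : Fin 35) then 6 else 0 := by decide

theorem key18 : ∀ u : Fin 35, LQ M18 (T u) = if u = (18 : Fin 35) then 6 else 0 := by decide

theorem key19 : ∀ u : Fin 35, LQ M19 (T u) = if u = (19 : Fin 35) then 6 else 0 := by decide

theorem key20 : ∀ u : Fin 35, LQ M20 (T u) = if u = (20 : Fin 35) then 6 else 0 := by decide

theorem key21 : ∀ u : Fin 35, LQ M21 (T u) = if u = (21 : Fin 35) then 6 else 0 := by decide

theorem key22 : ∀ u : Fin 35, LQ M22 (T u) = if u = (22 : Fin 35) then 6 else 0 := by decide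

theorem key23 : ∀ u : Fin 35, LQ M23 (T u) = if u = (23 : Fin 35) then 6 else 0 := by decide

theorem key24 : ∀ u : Fin 35, LQ M24 (T u) = if u = (24 : Fin 35) then 6 else 0 := by decide

theorem key25 : ∀ u : Fin 35, LQ M25 (T u) = if u = (25 : Fin 35) then 6 else 0 := by decide

theorem key26 : ∀ u : Fin 35, LQ M26 (T u) = if u = (26 : Fin 35) then 6 else 0 := by decide

theorem key27 : ∀ u : Fin 35, LQ M27 (T u) = if u = (27 : Fin 35) then 6 else 0 := by decide

theorem key28 : ∀ u : Fin 35, LQ M28 (T u) = if u = (28 : Fin 35) then 6 else 0 := by decide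

theorem key29 : ∀ u : Fin 35, LQ M29 (T u) = if u = (29 : Fin 35) then 6 else 0 := by decide

theorem key30 : ∀ u : Fin 35, LQ M30 (T u) = if u = (30 : Fin 35) then 6 else 0 := by decide

theorem key31 : ∀ u : Fin 35, LQ M31 (T u) = if u = (31 : Fin 35) then 6 else 0 := by decide

theorem key32 : ∀ u : Fin 35, LQ M32 (T u) = if u = (32 : Fin 35) then 6 else 0 := by decide

theorem key33 : ∀ u : Fin 35, LQ M33 (T u) = if u = (33 : Fin 35) then 6 else 0 := by decide

theorem key34 : ∀ u : Fin 35, LQ M34 (T u) = if u = (34 : Fin 35) then 6 else 0 := by decide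

theorem key : ∀ s u : Fin 35, LQ (Mt s) (T u) = if u = s then 6 else 0 := by
  intro s
  fin_cases s
  exacts [key0, key1, key2, key3, key4, key5, key6, key7, key8, key9, key10, key11, key12, key13, key14, key15, key16, key17, key18, key19, key20, key21, key22, key23, key24, key25, key26, key27, key28, key29, key30, key31, key32, key33, key34]

theorem cover : ∀ v : Fin 3 → Fin 7, Function.Injective v →
    ∃ u : Fin 35, ∃ σ : Equiv.Perm (Fin 3), v = T u ∘ σ := by decide

/-! ### Bridging from `ℤ` to `ℝ` -/

noncomputable def castv (w : Fin 7 → ℤ) : E7 := fun i => (w i : ℝ)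

theorem w3_cast (a b c : Fin 7) (v : Fin 3 → Fin 7 → ℤ) :
    w3 (p a) (p b) (p c) (fun r => castv (v r)) = ((w3Q a b c v : ℤ) : ℝ) := by
  have he : w3 (p a) (p b) (p c) (fun r => castv (v r))
      = Matrix.det (Matrix.of fun i => LinearMap.pi ![p a, p b, p c] (castv (v i))) := rfl
  have h2 : (Matrix.of fun i => LinearMap.pi ![p a, p b, p c] (castv (v i)))
      = (Int.castRingHom ℝ).mapMatrix (Matrix.of fun r s => v r (![a, b, c] s)) := by
    funext r s
    fin_cases s <;> rfl
  have h3 : Matrix.det (Matrix.of fun r s => v r (![a, b, c] s)) = w3Q a b c v := by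
    rw [Matrix.det_fin_three]
    simp only [w3Q, det3, Matrix.of_apply]
    ring
  rw [he, h2, ← RingHom.map_det, h3]
  rfl

theorem ω3_cast (v : Fin 3 → Fin 7 → ℤ) :
    ω3 (fun r => castv (v r)) = ((ω3Q v : ℤ) : ℝ) := by
  simp only [ω3, AlternatingMap.add_apply, AlternatingMap.sub_apply, w3_cast, ω3Q]
  push_cast
  ring

/-! ### Real-side objects -/

noncomputable def σlin : (Fin 35 → ℝ) →L[ℝ] Matrix (Fin 7) (Fin 7) ℝ :=
  LinearMap.toContinuousLinearMap
    { toFun := fun x => ∑ u : Fin 35, x u • ((6 : ℝ)⁻¹ • (Mt u).map (fun z : ℤ => (z : ℝ)))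
      map_add' := by
        intro x y
        simp [add_smul, Finset.sum_add_distrib]
      map_smul' := by
        intro c x
        simp [Finset.smul_sum, smul_smul, mul_assoc]
  }

theorem σlin_single (s : Fin 35) :
    σlin (Pi.single s 1) = (6 : ℝ)⁻¹ • (Mt s).map (fun z : ℤ => (z : ℝ)) := by
  have hs : σlin (Pi.single s 1)
      = ∑ u : Fin 35, Pi.single (M := fun _ : Fin 35 => ℝ) s 1 u
          • ((6 : ℝ)⁻¹ • (Mt u).map (fun z : ℤ => (z : ℝ))) := rfl
  rw [hs, Finset.sum_eq_single s]
  · simp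
  · intro b _ hb
    simp [Pi.single_apply, hb]
  · simp

noncomputable def pickCol (j : Fin 7) : Matrix (Fin 7) (Fin 7) ℝ →L[ℝ] E7 :=
  LinearMap.toContinuousLinearMap
    { toFun := fun A => fun a => A a j
      map_add' := by intro A B; rfl
      map_smul' := by intro c A; rfl }

noncomputable def colL (j : Fin 7) : (Fin 35 → ℝ) →L[ℝ] E7 := (pickCol j).comp σlin

noncomputable def bV (j : Fin 7) : E7 := castv (eQ j)

theorem bV_single (j : Fin 7) : bV j = Pi.single j 1 := by
  funext i
  simp [bV, castv, eQ, Pi.single_apply, apply_ite (fun z : ℤ => (z : ℝ))]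

theorem mulVec_bV (A : Matrix (Fin 7) (Fin 7) ℝ) (j : Fin 7) :
    A.mulVec (bV j) = fun a => A a j := by
  funext a
  rw [bV_single]
  simp [Matrix.mulVec_single]

noncomputable def ev : Forms →ₗ[ℝ] (Fin 35 → ℝ) where
  toFun φ := fun u => φ fun r => bV (T u r)
  map_add' := by intro φ ψ; funext u; simp
  map_smul' := by intro c φ; funext u; simp

theorem ev_injective : Function.Injective ev := by
  intro φ ψ h
  apply ContinuousAlternatingMap.toAlternatingMap_injective
  apply Module.Basis.ext_alternating (Pi.basisFun ℝ (Fin 7))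
  intro v hv
  obtain ⟨u, σ, rfl⟩ := cover v hv
  have hc : (fun i => (Pi.basisFun ℝ (Fin 7)) ((T u ∘ σ) i))
      = (fun i => bV (T u i)) ∘ σ := by
    funext i
    simp only [Function.comp_apply, Pi.basisFun_apply, bV_single]
  have hφ : φ.toAlternatingMap ((fun i => bV (T u i)) ∘ σ)
      = Equiv.Perm.sign σ • φ.toAlternatingMap (fun i => bV (T u i)) :=
    AlternatingMap.map_perm _ _ _
  have hψ : ψ.toAlternatingMap ((fun i => bV (T u i)) ∘ σ)
      = Equiv.Perm.sign σ • ψ.toAlternatingMap (fun i => bV (T u i)) :=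
    AlternatingMap.map_perm _ _ _
  have h0 : φ.toAlternatingMap (fun i => bV (T u i))
      = ψ.toAlternatingMap (fun i => bV (T u i)) := congrFun h u
  rw [hc, hφ, hψ, h0]

instance : FiniteDimensional ℝ Forms := FiniteDimensional.of_injective ev ev_injective

/-! ### The local map `H` and its derivative -/

noncomputable def f3 : ContinuousMultilinearMap ℝ (fun _ : Fin 3 => E7) ℝ :=
  ω3C.toContinuousMultilinearMap

noncomputable def H (x : Fin 35 → ℝ) : Fin 35 → ℝ :=
  fun u => f3 fun r => bV (T u r) + colL (T u r) x

theorem colL_single (j : Fin 7) (s : Fin 35) :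
    colL j (Pi.single s 1) = (6 : ℝ)⁻¹ • castv fun a => Mt s a j := by
  funext a
  show (σlin (Pi.single s 1)) a j = _
  rw [σlin_single]
  rfl

noncomputable def D (u : Fin 35) : (Fin 35 → ℝ) →L[ℝ] ℝ :=
  ∑ i : Fin 3, (f3.toContinuousLinearMap (fun j => bV (T u j) + colL (T u j) 0) i).comp
    (colL (T u i))

theorem hasFDerivAt_H : HasFDerivAt H (ContinuousLinearMap.pi D) 0 := by
  apply hasFDerivAt_pi.2
  intro u
  exact HasFDerivAt.multilinear_comp f3
    (g := fun i x => bV (T u i) + colL (T u i) x)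
    (g' := fun i => colL (T u i)) (x := 0)
    (fun i => (colL (T u i)).hasFDerivAt.const_add _)

theorem contDiff_H : ContDiff ℝ 1 H := by
  apply contDiff_pi.2
  intro u
  exact f3.contDiff.comp <| contDiff_pi.2 fun r => contDiff_const.add (colL (T u r)).contDiff

theorem base_eq (u : Fin 35) :
    (fun j => bV (T u j) + colL (T u j) 0) = fun j => castv (eQ (T u j)) := by
  funext j
  rw [map_zero, add_zero]
  rfl

theorem D_apply_single (u s : Fin 35) : D u (Pi.single s 1) = if u = s then 1 else 0 := by
  have hterm : ∀ i : Fin 3,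
      (f3.toContinuousLinearMap (fun j => bV (T u j) + colL (T u j) 0) i)
        (colL (T u i) (Pi.single s 1))
      = (6 : ℝ)⁻¹ * ((ω3Q (Function.update (fun j => eQ (T u j)) i
          (fun a => Mt s a (T u i))) : ℤ) : ℝ) := by
    intro i
    rw [colL_single, ContinuousLinearMap.map_smul, base_eq]
    rw [ContinuousMultilinearMap.toContinuousLinearMap_apply]
    have hupd : Function.update (fun j => castv (eQ (T u j))) i
        (castv fun a => Mt s a (T u i))
        = fun r => castv ((Function.update (fun j => eQ (T u j)) i
            (fun a => Mt s a (T u i))) r) := by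
      funext r
      rcases eq_or_ne r i with hri | hri
      · subst hri
        rw [Function.update_self, Function.update_self]
      · rw [Function.update_of_ne hri, Function.update_of_ne hri]
    rw [hupd]
    have hcst : f3 (fun r => castv ((Function.update (fun j => eQ (T u j)) i
        (fun a => Mt s a (T u i))) r))
        = ((ω3Q (Function.update (fun j => eQ (T u j)) i
            (fun a => Mt s a (T u i))) : ℤ) : ℝ) := ω3_cast _
    rw [hcst]
    simp [smul_eq_mul]
  have hsum : D u (Pi.single s 1)
      = ∑ i : Fin 3, (f3.toContinuousLinearMap (fun j => bV (T u j) + colL (T u j) 0) i)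
          (colL (T u i) (Pi.single s 1)) := by
    simp [D, ContinuousLinearMap.sum_apply]
  rw [hsum]
  rw [Fin.sum_univ_three, hterm 0, hterm 1, hterm 2]
  have hkey := key s u
  rw [LQ] at hkey
  have hcast : ((ω3Q (Function.update (fun j => eQ (T u j)) 0 (fun a => Mt s a (T u 0))) : ℤ) : ℝ)
      + ((ω3Q (Function.update (fun j => eQ (T u j)) 1 (fun a => Mt s a (T u 1))) : ℤ) : ℝ)
      + ((ω3Q (Function.update (fun j => eQ (T u j)) 2 (fun a => Mt s a (T u 2))) : ℤ) : ℝ)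
      = ((if u = s then (6 : ℤ) else 0 : ℤ) : ℝ) := by
    rw [← hkey]
    push_cast
    ring
  rw [← mul_add, ← mul_add, hcast]
  by_cases h : u = s <;> simp [h] <;> norm_num

theorem D_eq : ContinuousLinearMap.pi D
    = ((ContinuousLinearEquiv.refl ℝ (Fin 35 → ℝ) : (Fin 35 → ℝ) ≃L[ℝ] (Fin 35 → ℝ)) :
        (Fin 35 → ℝ) →L[ℝ] (Fin 35 → ℝ)) := by
  apply ContinuousLinearMap.coe_injective
  apply Module.Basis.ext (Pi.basisFun ℝ (Fin 35))
  intro s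
  rw [Pi.basisFun_apply]
  show (ContinuousLinearMap.pi D) (Pi.single s 1) = Pi.single s 1
  funext u
  rw [ContinuousLinearMap.pi_apply, D_apply_single, Pi.single_apply]

theorem hasStrictFDerivAt_H :
    HasStrictFDerivAt H
      ((ContinuousLinearEquiv.refl ℝ (Fin 35 → ℝ) : (Fin 35 → ℝ) ≃L[ℝ] (Fin 35 → ℝ)) :
        (Fin 35 → ℝ) →L[ℝ] (Fin 35 → ℝ)) 0 := by
  have h := contDiff_H.contDiffAt.hasStrictFDerivAt' (f' := ContinuousLinearMap.pi D)
    hasFDerivAt_H one_ne_zero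
  rwa [D_eq] at h

/-! ### From `H` to the orbit -/

def orbitSet : Set Forms :=
  {φ : Forms | ∃ g : GL (Fin 7) ℝ,
    φ = ω3C.compContinuousLinearMap
      (LinearMap.toContinuousLinearMap
        (Matrix.mulVecLin (g : Matrix (Fin 7) (Fin 7) ℝ)))}

theorem Hx_eq (x : Fin 35 → ℝ) :
    H x = ev (ω3C.compContinuousLinearMap
      (LinearMap.toContinuousLinearMap (Matrix.mulVecLin (1 + σlin x)))) := by
  funext u
  show f3 (fun r => bV (T u r) + colL (T u r) x)
      = (ω3C.compContinuousLinearMap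
        (LinearMap.toContinuousLinearMap (Matrix.mulVecLin (1 + σlin x))))
          (fun r => bV (T u r))
  rw [ContinuousAlternatingMap.compContinuousLinearMap_apply]
  show f3 _ = f3 _
  congr 1
  funext r
  show bV (T u r) + colL (T u r) x
      = Matrix.mulVecLin (1 + σlin x) (bV (T u r))
  rw [Matrix.mulVecLin_apply, Matrix.add_mulVec, Matrix.one_mulVec, mulVec_bV]
  rfl

theorem H0 : H 0 = ev ω3C := by
  funext u
  show f3 (fun r => bV (T u r) + colL (T u r) 0) = _
  rw [base_eq]
  rfl

theorem orbit_mem_nhds : orbitSet ∈ 𝓝 ω3C := by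
  have hev : Continuous ev := ev.continuous_of_finiteDimensional
  have hdet : Continuous fun x : Fin 35 → ℝ => (1 + σlin x).det :=
    Continuous.matrix_det (continuous_const.add σlin.continuous)
  have hU : {x : Fin 35 → ℝ | IsUnit (1 + σlin x)} ∈ 𝓝 (0 : Fin 35 → ℝ) := by
    have hopen : IsOpen {x : Fin 35 → ℝ | (1 + σlin x).det ≠ 0} :=
      isOpen_ne.preimage hdet
    refine Filter.mem_of_superset (hopen.mem_nhds ?_) ?_
    · show (1 + σlin 0).det ≠ 0
      rw [map_zero, add_zero, Matrix.det_one]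
      norm_num
    · intro x hx
      exact (Matrix.isUnit_iff_isUnit_det _).2 (isUnit_iff_ne_zero.2 hx)
  have hmap := hasStrictFDerivAt_H.map_nhds_eq_of_equiv
  have himg : H '' {x : Fin 35 → ℝ | IsUnit (1 + σlin x)} ∈ 𝓝 (ev ω3C) := by
    rw [← H0, ← hmap]
    exact Filter.image_mem_map hU
  have hsub : H '' {x : Fin 35 → ℝ | IsUnit (1 + σlin x)} ⊆ ev '' orbitSet := by
    rintro y ⟨x, hx, rfl⟩
    refine ⟨ω3C.compContinuousLinearMap
      (LinearMap.toContinuousLinearMap (Matrix.mulVecLin (1 + σlin x))),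
      ⟨hx.unit, ?_⟩, (Hx_eq x).symm⟩
    rw [IsUnit.unit_spec]
  have hmem : ev '' orbitSet ∈ 𝓝 (ev ω3C) := Filter.mem_of_superset himg hsub
  have hpre : ev ⁻¹' (ev '' orbitSet) ∈ 𝓝 ω3C :=
    hev.continuousAt.preimage_mem_nhds hmem
  rwa [Set.preimage_image_eq orbitSet ev_injective] at hpre

theorem comp_comp (A B : Matrix (Fin 7) (Fin 7) ℝ) (ψ : Forms) :
    (ψ.compContinuousLinearMap
        (LinearMap.toContinuousLinearMap (Matrix.mulVecLin B))).compContinuousLinearMap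
      (LinearMap.toContinuousLinearMap (Matrix.mulVecLin A))
    = ψ.compContinuousLinearMap
        (LinearMap.toContinuousLinearMap (Matrix.mulVecLin (B * A))) := by
  ext m
  simp only [ContinuousAlternatingMap.compContinuousLinearMap_apply]
  congr 1
  funext i
  show Matrix.mulVecLin B (Matrix.mulVecLin A (m i)) = Matrix.mulVecLin (B * A) (m i)
  rw [Matrix.mulVecLin_apply, Matrix.mulVecLin_apply, Matrix.mulVecLin_apply,
    Matrix.mulVec_mulVec]

theorem comp_one (ψ : Forms) :
    ψ.compContinuousLinearMap
      (LinearMap.toContinuousLinearMap (Matrix.mulVecLin (1 : Matrix (Fin 7) (Fin 7) ℝ))) = ψ := by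
  ext m
  simp only [ContinuousAlternatingMap.compContinuousLinearMap_apply]
  congr 1
  funext i
  show Matrix.mulVecLin 1 (m i) = m i
  rw [Matrix.mulVecLin_apply, Matrix.one_mulVec]

end G2Aux

open Topology Filter in
/-- The `GL(7,ℝ)`-orbit of ω³ under the pullback action, i.e. the set of 3-forms of
`G̃₂`-type on ℝ⁷, is open in the space of alternating 3-forms on ℝ⁷. -/
theorem isOpen_orbit_ω3 :
    IsOpen {φ : (Fin 7 → ℝ) [⋀^Fin 3]→L[ℝ] ℝ | ∃ g : GL (Fin 7) ℝ,
      φ = ω3C.compContinuousLinearMap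
        (LinearMap.toContinuousLinearMap
          (Matrix.mulVecLin (g : Matrix (Fin 7) (Fin 7) ℝ)))} := by
  show IsOpen G2Aux.orbitSet
  rw [isOpen_iff_mem_nhds]
  rintro φ ⟨g, rfl⟩
  set Rg : G2Aux.Forms →ₗ[ℝ] G2Aux.Forms :=
    ContinuousAlternatingMap.compContinuousLinearMapₗ
      (LinearMap.toContinuousLinearMap
        (Matrix.mulVecLin ((g⁻¹ : GL (Fin 7) ℝ) : Matrix (Fin 7) (Fin 7) ℝ))) with hRgdef
  have hRg : ∀ ψ : G2Aux.Forms, Rg ψ = ψ.compContinuousLinearMap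
      (LinearMap.toContinuousLinearMap
        (Matrix.mulVecLin ((g⁻¹ : GL (Fin 7) ℝ) : Matrix (Fin 7) (Fin 7) ℝ))) := fun _ => rfl
  have hcont : Continuous Rg := Rg.continuous_of_finiteDimensional
  have hTφ : Rg (ω3C.compContinuousLinearMap
      (LinearMap.toContinuousLinearMap
        (Matrix.mulVecLin ((g : Matrix (Fin 7) (Fin 7) ℝ))))) = ω3C := by
    rw [hRg, G2Aux.comp_comp]
    have hgg : (g : Matrix (Fin 7) (Fin 7) ℝ) * ((g⁻¹ : GL (Fin 7) ℝ) : Matrix (Fin 7) (Fin 7) ℝ)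
        = 1 := g.mul_inv
    rw [hgg, G2Aux.comp_one]
  have hsub : Rg ⁻¹' G2Aux.orbitSet ⊆ G2Aux.orbitSet := by
    rintro ψ ⟨h, hh⟩
    refine ⟨h * g, ?_⟩
    have h1 : ψ = (Rg ψ).compContinuousLinearMap
        (LinearMap.toContinuousLinearMap
          (Matrix.mulVecLin ((g : Matrix (Fin 7) (Fin 7) ℝ)))) := by
      rw [hRg, G2Aux.comp_comp]
      have hgg : ((g⁻¹ : GL (Fin 7) ℝ) : Matrix (Fin 7) (Fin 7) ℝ)
          * (g : Matrix (Fin 7) (Fin 7) ℝ) = 1 := g.inv_mul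
      rw [hgg, G2Aux.comp_one]
    rw [h1, hh, G2Aux.comp_comp, Units.val_mul]
  have h1 : Rg ⁻¹' G2Aux.orbitSet ∈ 𝓝 (ω3C.compContinuousLinearMap
      (LinearMap.toContinuousLinearMap
        (Matrix.mulVecLin ((g : Matrix (Fin 7) (Fin 7) ℝ))))) := by
    apply hcont.continuousAt.preimage_mem_nhds
    rw [hTφ]
    exact G2Aux.orbit_mem_nhds
  exact Filter.mem_of_superset h1 hsub
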